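/- Let m = 2. For integers i, j with 1 ≤ i ≤ n_1−2, 1 ≤ j ≤ n_2−2 and i(n_2−j+1) ≤ n_1 (equivalently j ≥ (i(n_2+1)−n_1)/i), let Δ := ({0,…,i} × {0,…,j−1}) ∪ {(0,j)} ⊆ E. Then the monomial-Cartesian code C_Δ^P is an optimal (r,δ)-LRC with (r,δ) = (i+1, n_1−i), dimension k = (i+1)j+1 and minimum distance d = n_1(n_2−j). Symmetrically, for 1 ≤ j ≤ n_2−2, 1 ≤ i ≤ n_1−2 with j(n_1−i+1) ≤ n_2 and Δ := ({0,…,i−1} × {0,…,j}) ∪ {(i,0)}, the code C_Δ^P is an optimal (j+1, n_2−j)-LRC with k = (j+1)i+1 and d = n_2(n_1−i). -/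

import Mathlib

/-- The set of evaluation points `P = P₁ × ⋯ × P_m`. -/
abbrev MCCPt {F : Type*} {m : ℕ} (P : Fin m → Finset F) : Type _ :=
  (j : Fin m) → {x // x ∈ P j}

/-- The evaluation vector of the monomial `X^e` at the points of `P`. -/
def evMon {F : Type*} [Field F] {m : ℕ} (P : Fin m → Finset F) (e : Fin m → ℕ) :
    MCCPt P → F :=
  fun x => ∏ j, (x j : F) ^ e j

/-- The monomial-Cartesian code `C_Δ^P = ev_P(V_Δ)`. -/
def MCC {F : Type*} [Field F] {m : ℕ} (P : Fin m → Finset F) (Δ : Finset (Fin m → ℕ)) :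
    Submodule F (MCCPt P → F) :=
  Submodule.span F (evMon P '' ↑Δ)

/-- The code `C ⊆ F^ι` has minimum Hamming distance exactly `d`. -/
def HasMinDist {F ι : Type*} [Field F] [DecidableEq F] [Fintype ι]
    (C : Submodule F (ι → F)) (d : ℕ) : Prop :=
  (∀ c ∈ C, c ≠ 0 → d ≤ hammingNorm c) ∧ ∃ c ∈ C, c ≠ 0 ∧ hammingNorm c = d

/-- The code `C ⊆ F^ι` is an `(r, δ)`-locally recoverable code. -/
def IsLRC {F ι : Type*} [Field F] [DecidableEq F] [DecidableEq ι] [Fintype ι]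
    (C : Submodule F (ι → F)) (r δ : ℕ) : Prop :=
  ∀ i : ι, ∃ R : Finset ι, i ∈ R ∧ R.card ≤ r + δ - 1 ∧
    ∀ c ∈ C, (∃ j ∈ R, c j ≠ 0) → δ ≤ (R.filter fun j => c j ≠ 0).card

/-- `C` is an optimal `(r, δ)`-LRC with dimension `k` and minimum distance `d`:
it is an `(r, δ)`-LRC attaining the Singleton-like bound
`k + d + (⌈k/r⌉ - 1)(δ - 1) = n + 1`. -/
def IsOptimalLRC {F ι : Type*} [Field F] [DecidableEq F] [DecidableEq ι] [Fintype ι]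
    (C : Submodule F (ι → F)) (k d r δ : ℕ) : Prop :=
  IsLRC C r δ ∧ Module.finrank F C = k ∧ HasMinDist C d ∧
    k + d + ((k + r - 1) / r - 1) * (δ - 1) = Fintype.card ι + 1

/-- The set `Δ³_{i,j} = ({0,…,i} × {0,…,j-1}) ∪ {(0,j)}`. -/
def Δ3 (i j : ℕ) : Finset (Fin 2 → ℕ) :=
  ((Finset.range (i + 1) ×ˢ Finset.range j).image fun p => ![p.1, p.2]) ∪ {![0, j]}

/-- The symmetric set `Δ³σ_{i,j} = ({0,…,i-1} × {0,…,j}) ∪ {(i,0)}`. -/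
def Δ3σ (i j : ℕ) : Finset (Fin 2 → ℕ) :=
  ((Finset.range i ×ˢ Finset.range (j + 1)).image fun p => ![p.1, p.2]) ∪ {![i, 0]}

set_option linter.unusedSectionVars false
set_option linter.unusedVariables false
set_option maxHeartbeats 1000000

open Polynomial Finset
section
variable {F : Type*} [Field F] [DecidableEq F]

lemma card_filter_eval_zero_le (S : Finset F) {p : F[X]} (hp : p ≠ 0) :
    (S.filter fun v => p.eval v = 0).card ≤ p.natDegree := by
  calc (S.filter fun v => p.eval v = 0).card ≤ p.roots.toFinset.card := by
        apply Finset.card_le_card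
        intro v hv
        simp only [Finset.mem_filter] at hv
        simp [Multiset.mem_toFinset, Polynomial.mem_roots, hp, IsRoot.def, hv.2]
    _ ≤ Multiset.card p.roots := Multiset.toFinset_card_le _
    _ ≤ p.natDegree := Polynomial.card_roots' p

lemma card_filter_coe (S : Finset F) (pred : F → Prop) [DecidablePred pred] :
    (Finset.univ.filter fun v : {x // x ∈ S} => pred ↑v).card = (S.filter pred).card := by
  apply Finset.card_bij (s := Finset.univ.filter fun v : {x // x ∈ S} => pred ↑v)
    (t := S.filter pred) (fun v _ => (v : F))
  · intro v hv; simp only [Finset.mem_filter] at hv ⊢; exact ⟨v.2, hv.2⟩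
  · intro a ha b hb h; exact Subtype.ext h
  · intro v hv; simp only [Finset.mem_filter] at hv
    exact ⟨⟨v, hv.1⟩, by simp [hv.2], rfl⟩

lemma card_filter_eval_ne_zero (S : Finset F) {p : F[X]} (hp : p ≠ 0) {t : ℕ}
    (hd : p.natDegree ≤ t) :
    S.card - t ≤ (Finset.univ.filter fun v : {x // x ∈ S} => p.eval ↑v ≠ 0).card := by
  rw [card_filter_coe S (fun u => p.eval u ≠ 0)]
  have h1 := Finset.card_filter_add_card_filter_not (s := S) (p := fun v => p.eval v = 0)
  have h2 := (card_filter_eval_zero_le S hp).trans hd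
  simp only [ne_eq]
  omega

lemma poly_eq_zero_of_eval (S : Finset F) {p : F[X]} (hd : p.natDegree < S.card)
    (h : ∀ v ∈ S, p.eval v = 0) : p = 0 :=
  Polynomial.eq_zero_of_natDegree_lt_card_of_eval_eq_zero' p S h hd

lemma coeff_sum_C_mul_X_pow {α : Type*} (s : Finset α) (f : α → F) (g : α → ℕ) (m : ℕ) :
    (∑ e ∈ s, C (f e) * X ^ g e).coeff m = ∑ e ∈ s.filter (fun e => g e = m), f e := by
  rw [Polynomial.finset_sum_coeff, Finset.sum_filter]
  refine Finset.sum_congr rfl fun e _ => ?_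
  rw [Polynomial.coeff_C_mul, Polynomial.coeff_X_pow]
  by_cases h : g e = m
  · simp [h]
  · simp only [h, if_false, mul_zero]
    rw [if_neg (fun hm => h hm.symm), mul_zero]

lemma eval_sum_C_mul_X_pow {α : Type*} (s : Finset α) (f : α → F) (g : α → ℕ) (x : F) :
    (∑ e ∈ s, C (f e) * X ^ g e).eval x = ∑ e ∈ s, f e * x ^ g e := by
  simp [Polynomial.eval_finset_sum]

lemma natDegree_sum_C_mul_X_pow_le {α : Type*} (s : Finset α) (f : α → F) (g : α → ℕ) (n : ℕ)
    (h : ∀ e ∈ s, g e ≤ n) : (∑ e ∈ s, C (f e) * X ^ g e).natDegree ≤ n :=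
  Polynomial.natDegree_sum_le_of_forall_le s _ fun e he =>
    (Polynomial.natDegree_C_mul_X_pow_le (f e) (g e)).trans (h e he)
end

section PT
variable {F : Type*} [Field F] [DecidableEq F] {P : Fin 2 → Finset F}

def pt2 (x : {v // v ∈ P 0}) (y : {v // v ∈ P 1}) : MCCPt P :=
  fun k => match k with
  | ⟨0, _⟩ => x
  | ⟨1, _⟩ => y

@[simp] lemma pt2_zero (x : {v // v ∈ P 0}) (y : {v // v ∈ P 1}) : pt2 x y 0 = x := rfl
@[simp] lemma pt2_one (x : {v // v ∈ P 0}) (y : {v // v ∈ P 1}) : pt2 x y 1 = y := rfl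

lemma pt2_eta (z : MCCPt P) : pt2 (z 0) (z 1) = z := by
  funext k
  fin_cases k <;> rfl

lemma fin2_eta (e : Fin 2 → ℕ) : ![e 0, e 1] = e := by
  funext k; fin_cases k <;> simp

def ptEquiv (P : Fin 2 → Finset F) : ({v // v ∈ P 0} × {v // v ∈ P 1}) ≃ MCCPt P where
  toFun p := pt2 p.1 p.2
  invFun z := (z 0, z 1)
  left_inv p := rfl
  right_inv z := pt2_eta z

lemma evMon_pt2 (e : Fin 2 → ℕ) (x : {v // v ∈ P 0}) (y : {v // v ∈ P 1}) :
    evMon P e (pt2 x y) = (x : F) ^ e 0 * (y : F) ^ e 1 := by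
  simp [evMon, Fin.prod_univ_two]

lemma hammingNorm_eq_sum [Fintype F] (c : MCCPt P → F) :
    hammingNorm c =
      ∑ x : {v // v ∈ P 0},
        (Finset.univ.filter fun y : {v // v ∈ P 1} => c (pt2 x y) ≠ 0).card := by
  classical
  rw [hammingNorm, Finset.card_filter,
    ← Equiv.sum_comp (ptEquiv P) (fun z => if c z ≠ 0 then 1 else 0), Fintype.sum_prod_type]
  refine Finset.sum_congr rfl fun x _ => ?_
  rw [Finset.card_filter]
  rfl
end PT

section DELTA
lemma mem_Δ3 {i j : ℕ} {e : Fin 2 → ℕ} :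
    e ∈ Δ3 i j ↔ (e 0 ≤ i ∧ e 1 < j) ∨ e = ![0, j] := by
  unfold Δ3
  simp only [Finset.mem_union, Finset.mem_image, Finset.mem_product, Finset.mem_range,
    Finset.mem_singleton, Prod.exists]
  constructor
  · rintro (⟨a, b, ⟨ha, hb⟩, rfl⟩ | rfl)
    · left
      refine ⟨?_, ?_⟩ <;> simp <;> omega
    · right; rfl
  · rintro (⟨h0, h1⟩ | rfl)
    · left; exact ⟨e 0, e 1, ⟨by omega, h1⟩, fin2_eta e⟩
    · right; rfl

lemma mem_Δ3σ {i j : ℕ} {e : Fin 2 → ℕ} :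
    e ∈ Δ3σ i j ↔ (e 0 < i ∧ e 1 ≤ j) ∨ e = ![i, 0] := by
  unfold Δ3σ
  simp only [Finset.mem_union, Finset.mem_image, Finset.mem_product, Finset.mem_range,
    Finset.mem_singleton, Prod.exists]
  constructor
  · rintro (⟨a, b, ⟨ha, hb⟩, rfl⟩ | rfl)
    · left
      refine ⟨?_, ?_⟩ <;> simp <;> omega
    · right; rfl
  · rintro (⟨h0, h1⟩ | rfl)
    · left; exact ⟨e 0, e 1, ⟨h0, by omega⟩, fin2_eta e⟩
    · right; rfl

lemma card_Δ3 (i j : ℕ) : (Δ3 i j).card = (i + 1) * j + 1 := by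
  rw [Δ3, Finset.card_union_of_disjoint, Finset.card_image_of_injective _ ?inj,
    Finset.card_product, Finset.card_range, Finset.card_range, Finset.card_singleton]
  case inj =>
    intro p q h
    have h0 := congrFun h 0; have h1 := congrFun h 1
    simp only [Matrix.cons_val_zero, Matrix.cons_val_one, Matrix.head_cons] at h0 h1
    exact Prod.ext h0 h1
  · simp only [Finset.disjoint_singleton_right, Finset.mem_image, Prod.exists]
    rintro ⟨a, b, hp, h⟩
    have := congrFun h 1
    simp only [Matrix.cons_val_one, Matrix.head_cons, Matrix.cons_val_zero] at this
    simp only [Finset.mem_product, Finset.mem_range] at hp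
    omega

lemma filter_coords {s : Finset (Fin 2 → ℕ)} {e' : Fin 2 → ℕ} (h : e' ∈ s) :
    s.filter (fun e => e 0 = e' 0 ∧ e 1 = e' 1) = {e'} := by
  ext e
  simp only [Finset.mem_filter, Finset.mem_singleton]
  constructor
  · rintro ⟨hs, h0, h1⟩
    rw [← fin2_eta e, h0, h1, fin2_eta]
  · rintro rfl; exact ⟨h, rfl, rfl⟩

lemma filter_Δ3_top {i j : ℕ} :
    (Δ3 i j).filter (fun e => e 1 = j) = {![0, j]} := by
  ext e
  simp only [Finset.mem_filter, Finset.mem_singleton, mem_Δ3]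
  constructor
  · rintro ⟨h | rfl, h1⟩
    · omega
    · rfl
  · rintro rfl
    refine ⟨Or.inr rfl, ?_⟩
    simp
end DELTA

section REP
variable {F : Type*} [Field F] [DecidableEq F] {P : Fin 2 → Finset F}

lemma sumfun_eq (Δ : Finset (Fin 2 → ℕ)) (a : (Fin 2 → ℕ) → F) :
    (∑ e ∈ Δ, a e • evMon P e) =
      fun z : MCCPt P => ∑ e ∈ Δ, a e * (z 0 : F) ^ e 0 * (z 1 : F) ^ e 1 := by
  funext z
  rw [Finset.sum_apply]
  refine Finset.sum_congr rfl fun e _ => ?_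
  simp [evMon, Fin.prod_univ_two, mul_assoc]

lemma rep_mem (Δ : Finset (Fin 2 → ℕ)) (a : (Fin 2 → ℕ) → F) :
    (fun z : MCCPt P => ∑ e ∈ Δ, a e * (z 0 : F) ^ e 0 * (z 1 : F) ^ e 1) ∈ MCC P Δ := by
  rw [← sumfun_eq]
  exact Submodule.sum_mem _ fun e he =>
    Submodule.smul_mem _ _ (Submodule.subset_span (Set.mem_image_of_mem _ he))

lemma exists_rep {Δ : Finset (Fin 2 → ℕ)} {c : MCCPt P → F} (hc : c ∈ MCC P Δ) :
    ∃ a : (Fin 2 → ℕ) → F,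
      c = fun z => ∑ e ∈ Δ, a e * (z 0 : F) ^ e 0 * (z 1 : F) ^ e 1 := by
  rw [MCC, Finsupp.mem_span_image_iff_linearCombination] at hc
  obtain ⟨l, hl, rfl⟩ := hc
  refine ⟨l, ?_⟩
  rw [← sumfun_eq]
  rw [Finsupp.linearCombination_apply, Finsupp.sum]
  refine Finset.sum_subset ?_ ?_
  · intro e he; exact (Finsupp.mem_supported F l).mp hl he
  · intro e _ he
    rw [Finsupp.notMem_support_iff.mp he, zero_smul]
end REP

section POLY
open Polynomial
variable {F : Type*} [Field F] [DecidableEq F]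

noncomputable def colP (Δ : Finset (Fin 2 → ℕ)) (a : (Fin 2 → ℕ) → F) (x : F) : F[X] :=
  ∑ e ∈ Δ, C (a e * x ^ e 0) * X ^ e 1

noncomputable def rowP (Δ : Finset (Fin 2 → ℕ)) (a : (Fin 2 → ℕ) → F) (y : F) : F[X] :=
  ∑ e ∈ Δ, C (a e * y ^ e 1) * X ^ e 0

noncomputable def secP (Δ : Finset (Fin 2 → ℕ)) (a : (Fin 2 → ℕ) → F) (b : ℕ) : F[X] :=
  ∑ e ∈ Δ.filter (fun e => e 1 = b), C (a e) * X ^ e 0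

lemma colP_eval (Δ : Finset (Fin 2 → ℕ)) (a : (Fin 2 → ℕ) → F) (x y : F) :
    (colP Δ a x).eval y = ∑ e ∈ Δ, a e * x ^ e 0 * y ^ e 1 := by
  rw [colP, eval_sum_C_mul_X_pow]

lemma rowP_eval (Δ : Finset (Fin 2 → ℕ)) (a : (Fin 2 → ℕ) → F) (x y : F) :
    (rowP Δ a y).eval x = ∑ e ∈ Δ, a e * x ^ e 0 * y ^ e 1 := by
  rw [rowP, eval_sum_C_mul_X_pow]
  exact Finset.sum_congr rfl fun e _ => by ring

lemma colP_coeff (Δ : Finset (Fin 2 → ℕ)) (a : (Fin 2 → ℕ) → F) (x : F) (b : ℕ) :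
    (colP Δ a x).coeff b = (secP Δ a b).eval x := by
  rw [colP, coeff_sum_C_mul_X_pow, secP, eval_sum_C_mul_X_pow]

lemma secP_coeff {Δ : Finset (Fin 2 → ℕ)} (a : (Fin 2 → ℕ) → F) {e' : Fin 2 → ℕ}
    (he' : e' ∈ Δ) : (secP Δ a (e' 1)).coeff (e' 0) = a e' := by
  rw [secP, coeff_sum_C_mul_X_pow, Finset.filter_filter]
  have : (Δ.filter fun e => e 1 = e' 1 ∧ e 0 = e' 0) =
      Δ.filter fun e => e 0 = e' 0 ∧ e 1 = e' 1 := by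
    apply Finset.filter_congr; intro e _; tauto
  rw [this, filter_coords he', Finset.sum_singleton]

lemma vanish {P : Fin 2 → Finset F} (Δ : Finset (Fin 2 → ℕ))
    (hΔ : ∀ e ∈ Δ, e 0 < (P 0).card ∧ e 1 < (P 1).card) (a : (Fin 2 → ℕ) → F)
    (h : ∀ x ∈ P 0, ∀ y ∈ P 1, ∑ e ∈ Δ, a e * x ^ e 0 * y ^ e 1 = 0) :
    ∀ e ∈ Δ, a e = 0 := by
  intro e' he'
  have h1 : 1 ≤ (P 1).card := by have := hΔ e' he'; omega
  have h0 : 1 ≤ (P 0).card := by have := hΔ e' he'; omega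
  have hcol : ∀ x ∈ P 0, colP Δ a x = 0 := by
    intro x hx
    refine poly_eq_zero_of_eval (P 1) ?_ (fun y hy => by rw [colP_eval]; exact h x hx y hy)
    calc (colP Δ a x).natDegree ≤ (P 1).card - 1 :=
          natDegree_sum_C_mul_X_pow_le _ _ _ _ fun e he => by have := hΔ e he; omega
      _ < (P 1).card := by omega
  have hsec : secP Δ a (e' 1) = 0 := by
    refine poly_eq_zero_of_eval (P 0) ?_ (fun x hx => by
      rw [← colP_coeff, hcol x hx, Polynomial.coeff_zero])
    calc (secP Δ a (e' 1)).natDegree ≤ (P 0).card - 1 :=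
          natDegree_sum_C_mul_X_pow_le _ _ _ _ fun e he => by
            have := hΔ e (Finset.mem_filter.mp he).1; omega
      _ < (P 0).card := by omega
  have := secP_coeff a he'
  rw [hsec, Polynomial.coeff_zero] at this
  exact this.symm

lemma finrank_MCC {P : Fin 2 → Finset F} (Δ : Finset (Fin 2 → ℕ))
    (hΔ : ∀ e ∈ Δ, e 0 < (P 0).card ∧ e 1 < (P 1).card) :
    Module.finrank F (MCC P Δ) = Δ.card := by
  classical
  have hli : LinearIndependent F (fun e : Δ => evMon P (e : Fin 2 → ℕ)) := by
    rw [Fintype.linearIndependent_iff]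
    intro g hg e
    set a : (Fin 2 → ℕ) → F := fun e => if h : e ∈ Δ then g ⟨e, h⟩ else 0 with ha
    have hga : ∀ e : Δ, g e = a (e : Fin 2 → ℕ) := fun e => by
      rw [ha]; simp
    have hsum : (∑ e ∈ Δ, a e • evMon P e) = 0 := by
      rw [← hg, Finset.univ_eq_attach, ← Finset.sum_attach Δ (fun e => a e • evMon P e)]
      exact Finset.sum_congr rfl fun e _ => by rw [hga]
    rw [sumfun_eq] at hsum
    have hv : ∀ e ∈ Δ, a e = 0 := by
      refine vanish Δ hΔ a fun x hx y hy => ?_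
      have := congrFun hsum (pt2 ⟨x, hx⟩ ⟨y, hy⟩)
      simpa using this
    rw [hga e]
    exact hv _ e.2
  have hMCC : MCC P Δ =
      Submodule.span F (Set.range fun e : Δ => evMon P (e : Fin 2 → ℕ)) := by
    rw [MCC, Set.image_eq_range]; rfl
  rw [hMCC, finrank_span_eq_card hli, Fintype.card_coe]
end POLY

section MAIN
open Polynomial
variable {F : Type*} [Field F] [Fintype F] [DecidableEq F]

lemma card_line (P : Fin 2 → Finset F) (y₀ : {v // v ∈ P 1}) (pred : MCCPt P → Prop)
    (predA : {v // v ∈ P 0} → Prop) [DecidablePred pred] [DecidablePred predA]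
    (hcomp : ∀ x, pred (pt2 x y₀) ↔ predA x) :
    (Finset.univ.filter fun z : MCCPt P => z 1 = y₀ ∧ pred z).card =
      (Finset.univ.filter predA).card := by
  classical
  apply Finset.card_bij (s := Finset.univ.filter fun z : MCCPt P => z 1 = y₀ ∧ pred z)
    (t := Finset.univ.filter predA) (fun z _ => z 0)
  · intro z hz
    simp only [Finset.mem_filter, Finset.mem_univ, true_and] at hz ⊢
    have hz2 : pt2 (z 0) y₀ = z := by rw [← hz.1, pt2_eta]
    rw [← hcomp, hz2]; exact hz.2
  · intro z hz z' hz' h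
    simp only [Finset.mem_filter, Finset.mem_univ, true_and] at hz hz'
    rw [← pt2_eta z, ← pt2_eta z', h, hz.1, hz'.1]
  · intro x hx
    simp only [Finset.mem_filter, Finset.mem_univ, true_and] at hx
    exact ⟨pt2 x y₀, by simp [Finset.mem_filter, (hcomp x).mpr hx], rfl⟩

lemma mainΔ3 (P : Fin 2 → Finset F) (i j : ℕ)
    (hi1 : 1 ≤ i) (hi2 : i + 2 ≤ (P 0).card) (hj1 : 1 ≤ j) (hj2 : j + 2 ≤ (P 1).card)
    (hij : i * ((P 1).card - j + 1) ≤ (P 0).card) :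
    IsOptimalLRC (MCC P (Δ3 i j)) ((i + 1) * j + 1) ((P 0).card * ((P 1).card - j))
      (i + 1) ((P 0).card - i) := by
  classical
  have hb : ∀ e ∈ Δ3 i j, e 0 ≤ i ∧ e 1 ≤ j := by
    intro e he
    rcases mem_Δ3.mp he with ⟨h0, h1⟩ | rfl
    · exact ⟨h0, le_of_lt h1⟩
    · constructor <;> simp
  have hΔ : ∀ e ∈ Δ3 i j, e 0 < (P 0).card ∧ e 1 < (P 1).card := by
    intro e he; have := hb e he; omega
  have hcardPt : Fintype.card (MCCPt P) = (P 0).card * (P 1).card := by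
    rw [← Fintype.card_congr (ptEquiv P), Fintype.card_prod, Fintype.card_coe, Fintype.card_coe]
  refine ⟨?_, ?_, ?_, ?_⟩
  · -- IsLRC
    intro z₀
    refine ⟨Finset.univ.filter (fun z : MCCPt P => z 1 = z₀ 1), by simp, ?_, ?_⟩
    · have hcard := card_line P (z₀ 1) (fun _ => True) (fun _ => True) (fun _ => Iff.rfl)
      simp only [and_true, Finset.filter_true] at hcard
      rw [hcard, Finset.card_univ, Fintype.card_coe]
      clear hcard
      omega
    · intro c hc hex
      obtain ⟨a, rfl⟩ := exists_rep hc
      set q : F[X] := rowP (Δ3 i j) a ↑(z₀ 1) with hq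
      have hcz : ∀ z : MCCPt P, z 1 = z₀ 1 →
          (∑ e ∈ Δ3 i j, a e * ((z 0 : F)) ^ e 0 * ((z 1 : F)) ^ e 1) = q.eval ↑(z 0) := by
        intro z hz; rw [hq, rowP_eval, hz]
      beta_reduce
      obtain ⟨z, hzR, hzne⟩ := hex
      beta_reduce at hzne
      simp only [Finset.mem_filter, Finset.mem_univ, true_and] at hzR
      have hqne : q ≠ 0 := by
        intro h
        rw [hcz z hzR, h, Polynomial.eval_zero] at hzne
        exact hzne rfl
      have hqdeg : q.natDegree ≤ i :=
        natDegree_sum_C_mul_X_pow_le _ _ _ _ fun e he => (hb e he).1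
      rw [Finset.filter_filter]
      have hiff : ∀ x : {v // v ∈ P 0},
          (∑ e ∈ Δ3 i j, a e * ((pt2 x (z₀ 1) 0 : F)) ^ e 0 * ((pt2 x (z₀ 1) 1 : F)) ^ e 1 ≠ 0)
            ↔ q.eval ↑x ≠ 0 := by
        intro x
        rw [hcz (pt2 x (z₀ 1)) rfl]
        rfl
      have hcl := card_line P (z₀ 1)
        (fun z => (∑ e ∈ Δ3 i j, a e * ((z 0 : F)) ^ e 0 * ((z 1 : F)) ^ e 1) ≠ 0)
        (fun x => q.eval ↑x ≠ 0) hiff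
      rw [hcl]
      exact card_filter_eval_ne_zero (P 0) hqne hqdeg
  · -- finrank
    rw [finrank_MCC _ hΔ, card_Δ3]
  · -- min dist
    constructor
    · -- lower bound
      intro c hc hcne
      obtain ⟨a, rfl⟩ := exists_rep hc
      rw [hammingNorm_eq_sum]
      beta_reduce
      have hcount : ∀ x : {v // v ∈ P 0},
          (Finset.univ.filter fun y : {v // v ∈ P 1} =>
            ∑ e ∈ Δ3 i j, a e * ((pt2 x y 0 : F)) ^ e 0 * ((pt2 x y 1 : F)) ^ e 1 ≠ 0) =
          (Finset.univ.filter fun y : {v // v ∈ P 1} =>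
            (colP (Δ3 i j) a ↑x).eval ↑y ≠ 0) := by
        intro x
        refine Finset.filter_congr fun y _ => ?_
        rw [colP_eval]
        exact Iff.rfl
      have hdegcol : ∀ x : F, (colP (Δ3 i j) a x).natDegree ≤ j :=
        fun x => natDegree_sum_C_mul_X_pow_le _ _ _ _ fun e he => (hb e he).2
      by_cases ha0 : a ![0, j] = 0
      · -- top coefficient vanishes
        obtain ⟨e', he', hae⟩ : ∃ e' ∈ Δ3 i j, a e' ≠ 0 := by
          by_contra h
          push_neg at h
          apply hcne
          funext z
          exact Finset.sum_eq_zero fun e he => by rw [h e he, zero_mul, zero_mul]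
        set g : F[X] := secP (Δ3 i j) a (e' 1) with hgdef
        have hg : g ≠ 0 := by
          intro h
          have := secP_coeff a he'
          rw [hgdef] at h
          rw [h, Polynomial.coeff_zero] at this
          exact hae this.symm
        have hgdeg : g.natDegree ≤ i :=
          natDegree_sum_C_mul_X_pow_le _ _ _ _ fun e he =>
            (hb e (Finset.mem_filter.mp he).1).1
        set G := Finset.univ.filter (fun x : {v // v ∈ P 0} => g.eval ↑x ≠ 0) with hGdef
        have hGcard : (P 0).card - i ≤ G.card := card_filter_eval_ne_zero (P 0) hg hgdeg
        have hcoldeg : ∀ x : F, (colP (Δ3 i j) a x).natDegree ≤ j - 1 := by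
          intro x
          have hterm : Polynomial.C (a ![0, j] * x ^ (![0, j] : Fin 2 → ℕ) 0) *
              Polynomial.X ^ (![0, j] : Fin 2 → ℕ) 1 = 0 := by
            rw [ha0, zero_mul, map_zero, zero_mul]
          rw [colP, ← Finset.sum_erase (Δ3 i j)
            (f := fun e => Polynomial.C (a e * x ^ e 0) * Polynomial.X ^ e 1) hterm]
          refine natDegree_sum_C_mul_X_pow_le _ _ _ _ fun e he => ?_
          obtain ⟨hne, heΔ⟩ := Finset.mem_erase.mp he
          rcases mem_Δ3.mp heΔ with ⟨h0, h1⟩ | rfl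
          · omega
          · exact absurd rfl hne
        have hcolne : ∀ x : {v // v ∈ P 0}, x ∈ G → colP (Δ3 i j) a ↑x ≠ 0 := by
          intro x hx h
          rw [hGdef] at hx
          simp only [Finset.mem_filter, Finset.mem_univ, true_and] at hx
          apply hx
          have := colP_coeff (Δ3 i j) a ↑x (e' 1)
          rw [h, Polynomial.coeff_zero] at this
          rw [hgdef]
          exact this.symm
        have harith : (P 0).card * ((P 1).card - j) ≤
            ((P 0).card - i) * ((P 1).card - j + 1) := by
          rw [Nat.sub_mul]
          apply Nat.le_sub_of_add_le
          calc (P 0).card * ((P 1).card - j) + i * ((P 1).card - j + 1)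
              ≤ (P 0).card * ((P 1).card - j) + (P 0).card := Nat.add_le_add_left hij _
            _ = (P 0).card * ((P 1).card - j + 1) := by ring
        have hperx : ∀ x ∈ G, (P 1).card - j + 1 ≤
            (Finset.univ.filter fun y : {v // v ∈ P 1} =>
              ∑ e ∈ Δ3 i j, a e * ((pt2 x y 0 : F)) ^ e 0 * ((pt2 x y 1 : F)) ^ e 1 ≠ 0).card := by
          intro x hx
          rw [hcount x]
          have := card_filter_eval_ne_zero (P 1) (hcolne x hx) (hcoldeg ↑x)
          omega
        calc (P 0).card * ((P 1).card - j)
            ≤ ((P 0).card - i) * ((P 1).card - j + 1) := harith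
          _ ≤ G.card * ((P 1).card - j + 1) :=
              Nat.mul_le_mul_right _ hGcard
          _ = G.card • ((P 1).card - j + 1) := by rw [smul_eq_mul]
          _ ≤ ∑ x ∈ G, (Finset.univ.filter fun y : {v // v ∈ P 1} =>
              ∑ e ∈ Δ3 i j, a e * ((pt2 x y 0 : F)) ^ e 0 * ((pt2 x y 1 : F)) ^ e 1 ≠ 0).card :=
              Finset.card_nsmul_le_sum G _ _ hperx
          _ ≤ ∑ x : {v // v ∈ P 0}, (Finset.univ.filter fun y : {v // v ∈ P 1} =>
              ∑ e ∈ Δ3 i j, a e * ((pt2 x y 0 : F)) ^ e 0 * ((pt2 x y 1 : F)) ^ e 1 ≠ 0).card :=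
              Finset.sum_le_sum_of_subset (Finset.subset_univ G)
      · -- top coefficient nonzero
        have hcolne : ∀ x : F, colP (Δ3 i j) a x ≠ 0 := by
          intro x h
          have := colP_coeff (Δ3 i j) a x j
          rw [h, Polynomial.coeff_zero] at this
          have hsec : secP (Δ3 i j) a j = Polynomial.C (a ![0, j]) *
              Polynomial.X ^ (![0, j] : Fin 2 → ℕ) 0 := by
            rw [secP, filter_Δ3_top, Finset.sum_singleton]
          rw [hsec] at this
          simp only [Matrix.cons_val_zero, pow_zero, mul_one, Polynomial.eval_C] at this
          exact ha0 this.symm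
        have hperx : ∀ x : {v // v ∈ P 0}, (P 1).card - j ≤
            (Finset.univ.filter fun y : {v // v ∈ P 1} =>
              ∑ e ∈ Δ3 i j, a e * ((pt2 x y 0 : F)) ^ e 0 * ((pt2 x y 1 : F)) ^ e 1 ≠ 0).card := by
          intro x
          rw [hcount x]
          exact card_filter_eval_ne_zero (P 1) (hcolne ↑x) (hdegcol ↑x)
        calc (P 0).card * ((P 1).card - j)
            = Fintype.card {v // v ∈ P 0} * ((P 1).card - j) := by rw [Fintype.card_coe]
          _ = ∑ _x : {v // v ∈ P 0}, ((P 1).card - j) := by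
              rw [Finset.sum_const, Finset.card_univ, smul_eq_mul]
          _ ≤ ∑ x : {v // v ∈ P 0}, (Finset.univ.filter fun y : {v // v ∈ P 1} =>
              ∑ e ∈ Δ3 i j, a e * ((pt2 x y 0 : F)) ^ e 0 * ((pt2 x y 1 : F)) ^ e 1 ≠ 0).card :=
              Finset.sum_le_sum fun x _ => hperx x
    · -- existence of a minimum weight codeword
      obtain ⟨T, hTsub, hTcard⟩ := Finset.exists_subset_card_eq (s := P 1) (n := j) (by omega)
      set p : F[X] := ∏ t ∈ T, (Polynomial.X - Polynomial.C t) with hpdef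
      have hpdeg : p.natDegree = j := by
        rw [hpdef, Polynomial.natDegree_prod _ _ (fun t _ => Polynomial.X_sub_C_ne_zero t)]
        simp [Polynomial.natDegree_X_sub_C, hTcard]
      have hpeval_ne : ∀ v : F, v ∉ T → p.eval v ≠ 0 := by
        intro v hv
        rw [hpdef, Polynomial.eval_prod]
        refine Finset.prod_ne_zero_iff.mpr fun t ht => ?_
        simp only [Polynomial.eval_sub, Polynomial.eval_X, Polynomial.eval_C, sub_ne_zero]
        rintro rfl
        exact hv ht
      have hpeval_z : ∀ v ∈ T, p.eval v = 0 := by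
        intro v hv
        rw [hpdef, Polynomial.eval_prod]
        exact Finset.prod_eq_zero hv (by simp)
      refine ⟨fun z => p.eval ↑(z 1), ?_, ?_, ?_⟩
      · have hrep : (fun z : MCCPt P => p.eval ↑(z 1)) =
            ∑ b ∈ Finset.range (j + 1), p.coeff b • evMon P ![0, b] := by
          funext z
          rw [Finset.sum_apply, Polynomial.eval_eq_sum_range, hpdeg]
          refine Finset.sum_congr rfl fun b _ => ?_
          simp [evMon, Fin.prod_univ_two]
        rw [hrep]
        refine Submodule.sum_mem _ fun b hb' => Submodule.smul_mem _ _ (Submodule.subset_span ?_)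
        refine Set.mem_image_of_mem _ ?_
        rw [Finset.mem_coe, mem_Δ3]
        rcases Nat.lt_or_ge b j with h | h
        · left
          constructor <;> simp [h]
        · right
          have hbj : b = j := by
            have := Finset.mem_range.mp hb'
            omega
          rw [hbj]
      · obtain ⟨y, hy⟩ : ((P 1) \ T).Nonempty := by
          rw [← Finset.card_pos, Finset.card_sdiff_of_subset hTsub, hTcard]
          omega
        obtain ⟨hyP, hyT⟩ := Finset.mem_sdiff.mp hy
        obtain ⟨x, hx⟩ : (P 0).Nonempty := by
          rw [← Finset.card_pos]
          omega
        intro h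
        have := congrFun h (pt2 ⟨x, hx⟩ ⟨y, hyP⟩)
        simp only [Pi.zero_apply] at this
        exact hpeval_ne y hyT this
      · rw [hammingNorm_eq_sum]
        beta_reduce
        have hinner : ∀ x : {v // v ∈ P 0},
            (Finset.univ.filter fun y : {v // v ∈ P 1} =>
              p.eval ↑(pt2 x y 1) ≠ 0).card = (P 1).card - j := by
          intro x
          have h1 : (Finset.univ.filter fun y : {v // v ∈ P 1} => p.eval ↑(pt2 x y 1) ≠ 0) =
              Finset.univ.filter (fun y : {v // v ∈ P 1} => p.eval ↑y ≠ 0) :=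
            Finset.filter_congr fun y _ => Iff.rfl
          rw [h1, card_filter_coe (P 1) (fun v => p.eval v ≠ 0)]
          have h2 : (P 1).filter (fun v => p.eval v ≠ 0) = P 1 \ T := by
            ext v
            simp only [Finset.mem_filter, Finset.mem_sdiff]
            constructor
            · rintro ⟨h1', h2'⟩
              exact ⟨h1', fun hvT => h2' (hpeval_z v hvT)⟩
            · rintro ⟨h1', h2'⟩
              exact ⟨h1', hpeval_ne v h2'⟩
          rw [h2, Finset.card_sdiff_of_subset hTsub, hTcard]
        rw [Finset.sum_congr rfl fun x _ => hinner x, Finset.sum_const, Finset.card_univ,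
          Fintype.card_coe, smul_eq_mul]

  · -- singleton equality
    obtain ⟨s, hs⟩ : ∃ s, (P 0).card = i + 2 + s := ⟨(P 0).card - (i+2), by omega⟩
    obtain ⟨t, ht⟩ : ∃ t, (P 1).card = j + 2 + t := ⟨(P 1).card - (j+2), by omega⟩
    have hk : (i + 1) * j + 1 + (i + 1) - 1 = (i + 1) * (j + 1) := by
      rw [Nat.mul_succ]
      generalize (i + 1) * j = K
      omega
    rw [hk, Nat.mul_div_cancel_left _ (Nat.succ_pos i), hcardPt, hs, ht]
    have h1 : j + 2 + t - j = t + 2 := by omega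
    have h2 : i + 2 + s - i - 1 = s + 1 := by omega
    rw [h1, h2, Nat.add_sub_cancel]
    ring
end MAIN

section TRANSPORT
variable {F : Type*} [Field F] [DecidableEq F]

lemma hammingNorm_comp_equiv {ι ι' : Type*} [Fintype ι] [Fintype ι'] [DecidableEq ι]
    [DecidableEq ι'] (c : ι' → F) (τ : ι ≃ ι') :
    hammingNorm (fun z => c (τ z)) = hammingNorm c := by
  simp only [hammingNorm]
  apply Finset.card_bij (s := Finset.univ.filter fun z : ι => c (τ z) ≠ 0)
    (t := Finset.univ.filter fun w : ι' => c w ≠ 0) (fun z _ => τ z)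
  · intro z hz
    simp only [Finset.mem_filter, Finset.mem_univ, true_and] at hz ⊢
    exact hz
  · intro z _ z' _ h
    exact τ.injective h
  · intro w hw
    simp only [Finset.mem_filter, Finset.mem_univ, true_and] at hw
    exact ⟨τ.symm w, by simp [hw], by simp⟩

lemma optimal_map {ι ι' : Type*} [Fintype ι] [Fintype ι'] [DecidableEq ι] [DecidableEq ι']
    (τ : ι ≃ ι') (C : Submodule F (ι' → F)) {k d r δ : ℕ}
    (h : IsOptimalLRC C k d r δ) :
    IsOptimalLRC (Submodule.map (LinearMap.funLeft F F τ) C) k d r δ := by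
  obtain ⟨hlrc, hrank, ⟨hlow, cw, hcwC, hcwne, hcwnorm⟩, heq⟩ := h
  have hzero : ∀ c' : ι' → F, LinearMap.funLeft F F (⇑τ) c' = 0 → c' = 0 := by
    intro c' h
    funext u
    have := congrFun h (τ.symm u)
    simpa [LinearMap.funLeft_apply] using this
  refine ⟨?_, ?_, ⟨?_, ?_⟩, ?_⟩
  · intro z
    obtain ⟨R, hzR, hRcard, hR⟩ := hlrc (τ z)
    refine ⟨R.image τ.symm, by simpa using Finset.mem_image_of_mem τ.symm hzR,
      le_trans (le_of_eq (Finset.card_image_of_injective _ τ.symm.injective)) hRcard, ?_⟩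
    rintro c ⟨c', hc', rfl⟩ hex
    have hex' : ∃ w ∈ R, c' w ≠ 0 := by
      obtain ⟨w, hwR, hwne⟩ := hex
      obtain ⟨u, huR, rfl⟩ := Finset.mem_image.mp hwR
      refine ⟨u, huR, ?_⟩
      simpa [LinearMap.funLeft_apply] using hwne
    have hfil : ((R.image τ.symm).filter fun w => LinearMap.funLeft F F (⇑τ) c' w ≠ 0).card =
        (R.filter fun w => c' w ≠ 0).card := by
      rw [Finset.filter_image]
      rw [Finset.card_image_of_injective _ τ.symm.injective]
      congr 1
      refine Finset.filter_congr fun u _ => ?_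
      simp [LinearMap.funLeft_apply]
    rw [hfil]
    exact hR c' hc' hex'
  · have hmap : Submodule.map (LinearMap.funLeft F F ⇑τ) C =
        Submodule.map ((LinearEquiv.funCongrLeft F F τ : (ι' → F) ≃ₗ[F] (ι → F)) :
          (ι' → F) →ₗ[F] (ι → F)) C := rfl
    rw [hmap, LinearEquiv.finrank_map_eq, hrank]
  · rintro c ⟨c', hc', rfl⟩ hcne
    have : LinearMap.funLeft F F (⇑τ) c' = fun z => c' (τ z) := rfl
    rw [this, hammingNorm_comp_equiv]
    exact hlow c' hc' fun h => hcne (by rw [this, h]; funext z; simp)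
  · refine ⟨LinearMap.funLeft F F (⇑τ) cw, Submodule.mem_map_of_mem hcwC, ?_, ?_⟩
    · intro h
      exact hcwne (hzero cw h)
    · have : LinearMap.funLeft F F (⇑τ) cw = fun z => cw (τ z) := rfl
      rw [this, hammingNorm_comp_equiv]
      exact hcwnorm
  · rw [Fintype.card_congr τ]
    exact heq
end TRANSPORT

section SW
def sw : Fin 2 ≃ Fin 2 where
  toFun := fun k => Fin.cases 1 (fun _ => 0) k
  invFun := fun k => Fin.cases 1 (fun _ => 0) k
  left_inv := by decide
  right_inv := by decide

@[simp] lemma sw_zero : sw 0 = 1 := rfl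
@[simp] lemma sw_one : sw 1 = 0 := rfl
@[simp] lemma sw_symm_zero : sw.symm 0 = 1 := rfl
@[simp] lemma sw_symm_one : sw.symm 1 = 0 := rfl

lemma Δ3σ_eq (i j : ℕ) : Δ3σ i j = (Δ3 j i).image (fun e => e ∘ sw) := by
  ext f
  simp only [Finset.mem_image]
  rw [mem_Δ3σ]
  constructor
  · intro hf
    refine ⟨f ∘ sw, ?_, ?_⟩
    · rw [mem_Δ3]
      rcases hf with ⟨h0, h1⟩ | rfl
      · left
        exact ⟨h1, h0⟩
      · right
        funext k
        fin_cases k <;> rfl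
    · funext k
      fin_cases k <;> rfl
  · rintro ⟨e, he, rfl⟩
    rw [mem_Δ3] at he
    rcases he with ⟨h0, h1⟩ | rfl
    · left
      exact ⟨h1, h0⟩
    · right
      funext k
      fin_cases k <;> rfl
end SW

section MCCSIGMA
variable {F : Type*} [Field F] [DecidableEq F]

def τP (P : Fin 2 → Finset F) : MCCPt P ≃ MCCPt (fun k => P (sw.symm k)) :=
  Equiv.piCongrLeft' (fun k => {x // x ∈ P k}) sw

lemma MCC_σ (P : Fin 2 → Finset F) (Δ : Finset (Fin 2 → ℕ)) :
    MCC P (Δ.image (fun e => e ∘ sw)) =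
      Submodule.map (LinearMap.funLeft F F (τP P)) (MCC (fun k => P (sw.symm k)) Δ) := by
  rw [MCC, MCC, Submodule.map_span]
  congr 1
  rw [Finset.coe_image, ← Set.image_comp, ← Set.image_comp]
  refine Set.image_congr fun e _ => ?_
  funext z
  show evMon P (e ∘ sw) z = evMon (fun k => P (sw.symm k)) e (fun k => z (sw.symm k))
  rw [evMon, evMon]
  rw [← Equiv.prod_comp sw (fun k => ((z (sw.symm k) : F)) ^ e k)]
  refine Finset.prod_congr rfl fun k _ => ?_
  rw [Equiv.symm_apply_apply]
  rfl
end MCCSIGMA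


/-- For `1 ≤ i ≤ n₁-2`, `1 ≤ j ≤ n₂-2` with `i(n₂-j+1) ≤ n₁`, the
monomial-Cartesian code on `Δ³_{i,j}` is an optimal `(i+1, n₁-i)`-LRC with dimension
`(i+1)j+1` and minimum distance `n₁(n₂-j)`; symmetrically, for `1 ≤ j' ≤ n₂-2`,
`1 ≤ i' ≤ n₁-2` with `j'(n₁-i'+1) ≤ n₂`, the code on `Δ³σ_{i',j'}` is an optimal
`(j'+1, n₂-j')`-LRC with dimension `(j'+1)i'+1` and minimum distance `n₂(n₁-i')`. -/
theorem mcc_rectwithp_optimal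
    {F : Type*} [Field F] [Fintype F] [DecidableEq F]
    (P : Fin 2 → Finset F) (hP : ∀ j, 2 ≤ (P j).card)
    (i j : ℕ) (hi1 : 1 ≤ i) (hi2 : i ≤ (P 0).card - 2)
    (hj1 : 1 ≤ j) (hj2 : j ≤ (P 1).card - 2)
    (hij : i * ((P 1).card - j + 1) ≤ (P 0).card)
    (i' j' : ℕ) (hi'1 : 1 ≤ i') (hi'2 : i' ≤ (P 0).card - 2)
    (hj'1 : 1 ≤ j') (hj'2 : j' ≤ (P 1).card - 2)
    (hij' : j' * ((P 0).card - i' + 1) ≤ (P 1).card) :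
    IsOptimalLRC (MCC P (Δ3 i j))
      ((i + 1) * j + 1) ((P 0).card * ((P 1).card - j)) (i + 1) ((P 0).card - i) ∧
    IsOptimalLRC (MCC P (Δ3σ i' j'))
      ((j' + 1) * i' + 1) ((P 1).card * ((P 0).card - i')) (j' + 1) ((P 1).card - j') := by
  have hP0 := hP 0
  have hP1 := hP 1
  constructor
  · exact mainΔ3 P i j hi1 (by omega) hj1 (by omega) hij
  · have hmain := mainΔ3 (fun k => P (sw.symm k)) j' i' hj'1
      (by show j' + 2 ≤ (P 1).card; omega) hi'1 (by show i' + 2 ≤ (P 0).card; omega)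
      (by show j' * ((P 0).card - i' + 1) ≤ (P 1).card; exact hij')
    have hres := optimal_map (τP P) (MCC (fun k => P (sw.symm k)) (Δ3 j' i')) hmain
    rw [← MCC_σ P (Δ3 j' i'), ← Δ3σ_eq i' j'] at hres
    exact hres
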